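/- If f is a proper colouring of a finite graph G with list assignment L whose colour set is C = ⋃_v L(v), and f uses only colours from C, then there exists a surjective proper colouring g : V(G) → C such that for every vertex v, either g(v) ∈ L(v) or g(v) = f(v), provided |C| ≤ |V(G)| and there is a system of distinct representatives φ : C → V(G) with c ∈ L(φ(c)). -/

import Mathlib

open Finset

/-- If `f` is a proper colouring of `G` using only colours of `C = ⋃ v, L v`,
`|C| ≤ |V|`, and there is a system of distinct representatives `φ : C → V` with
`c ∈ L (φ c)`, then there is a surjective (onto `C`) proper colouring `g` such that
for each vertex `v`, either `g v ∈ L v` or `g v = f v`. -/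
theorem stmt_3 {V : Type*} [Fintype V] [DecidableEq V] (G : SimpleGraph V)
    (L : V → Finset ℕ) (f : V → ℕ)
    (hf : ∀ u v, G.Adj u v → f u ≠ f v)
    (hfC : ∀ v, f v ∈ univ.biUnion L)
    (hcard : (univ.biUnion L).card ≤ Fintype.card V)
    (φ : {c : ℕ // c ∈ univ.biUnion L} → V)
    (hφinj : Function.Injective φ)
    (hφ : ∀ c : {c : ℕ // c ∈ univ.biUnion L}, (c : ℕ) ∈ L (φ c)) :
    ∃ g : V → ℕ, (∀ u v, G.Adj u v → g u ≠ g v) ∧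
      (∀ c ∈ univ.biUnion L, ∃ v, g v = c) ∧
      (∀ v, g v ∈ univ.biUnion L) ∧
      ∀ v, g v ∈ L v ∨ g v = f v := by
  classical
  suffices h : ∀ n (g : V → ℕ), (∀ u v, G.Adj u v → g u ≠ g v) →
      (∀ v, g v ∈ univ.biUnion L) → (∀ v, g v ∈ L v ∨ g v = f v) →
      (Finset.univ.filter (fun c : {c : ℕ // c ∈ univ.biUnion L} => g (φ c) ≠ (c : ℕ))).card ≤ n →
      ∃ g' : V → ℕ, (∀ u v, G.Adj u v → g' u ≠ g' v) ∧ (∀ c ∈ univ.biUnion L, ∃ v, g' v = c) ∧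
        (∀ v, g' v ∈ univ.biUnion L) ∧ ∀ v, g' v ∈ L v ∨ g' v = f v by
    obtain ⟨g, h1, h2, h3, h4⟩ :=
      h (Finset.univ.filter (fun c : {c : ℕ // c ∈ univ.biUnion L} => f (φ c) ≠ (c : ℕ))).card f hf hfC
        (fun v => Or.inr rfl) le_rfl
    exact ⟨g, h1, h2, h3, h4⟩
  intro n
  induction n with
  | zero =>
    intro g hg1 hg2 hg3 hcard0
    refine ⟨g, hg1, ?_, hg2, hg3⟩
    intro c hc
    refine ⟨φ ⟨c, hc⟩, ?_⟩
    by_contra hne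
    have hmem : (⟨c, hc⟩ : {c : ℕ // c ∈ univ.biUnion L}) ∈
        Finset.univ.filter (fun c : {c : ℕ // c ∈ univ.biUnion L} => g (φ c) ≠ (c : ℕ)) := by
      simp [hne]
    have := Finset.card_pos.mpr ⟨_, hmem⟩
    omega
  | succ n ih =>
    intro g hg1 hg2 hg3 hcard'
    by_cases hsurj : ∀ c ∈ univ.biUnion L, ∃ v, g v = c
    · exact ⟨g, hg1, hsurj, hg2, hg3⟩
    · push_neg at hsurj
      obtain ⟨c, hcC, hcun⟩ := hsurj
      set c' : {c : ℕ // c ∈ univ.biUnion L} := ⟨c, hcC⟩ with hc'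
      set g' := Function.update g (φ c') c with hg'def
      have hg'at : g' (φ c') = c := Function.update_self _ _ _
      have hg'ne : ∀ v, v ≠ φ c' → g' v = g v := fun v hv =>
        Function.update_of_ne hv _ _
      have hgvne : ∀ v, g v ≠ c := fun v h => hcun v h
      apply ih g'
      · intro u v huv
        by_cases hu : u = φ c' <;> by_cases hv : v = φ c'
        · exact absurd (hu.trans hv.symm) (G.ne_of_adj huv)
        · rw [hu, hg'at, hg'ne v hv]
          exact fun h => hgvne v h.symm
        · rw [hv, hg'at, hg'ne u hu]
          exact hgvne u
        · rw [hg'ne u hu, hg'ne v hv]; exact hg1 u v huv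
      · intro v
        by_cases hv : v = φ c'
        · rw [hv, hg'at]; exact hcC
        · rw [hg'ne v hv]; exact hg2 v
      · intro v
        by_cases hv : v = φ c'
        · rw [hv, hg'at]; exact Or.inl (hφ c')
        · rw [hg'ne v hv]; exact hg3 v
      · have hsub : Finset.univ.filter (fun d : {c : ℕ // c ∈ univ.biUnion L} => g' (φ d) ≠ (d : ℕ)) ⊆
            (Finset.univ.filter (fun d : {c : ℕ // c ∈ univ.biUnion L} => g (φ d) ≠ (d : ℕ))).erase c' := by
          intro d hd
          simp only [Finset.mem_filter, Finset.mem_univ, true_and] at hd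
          rcases eq_or_ne d c' with rfl | hdc
          · exact absurd hg'at hd
          · have : φ d ≠ φ c' := fun h => hdc (hφinj h)
            rw [hg'ne _ this] at hd
            exact Finset.mem_erase.mpr ⟨hdc, by simp [hd]⟩
        have hmem : c' ∈ Finset.univ.filter (fun d : {c : ℕ // c ∈ univ.biUnion L} => g (φ d) ≠ (d : ℕ)) := by
          simp [hgvne (φ c')]; exact hgvne (φ c')
        have h1 := Finset.card_le_card hsub
        rw [Finset.card_erase_of_mem hmem] at h1
        have h2 := Finset.card_pos.mpr ⟨_, hmem⟩
        omega
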